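/- arXiv:1901.02971 — 3 statements merged into one kernel-verified Lean document; each statement's English description precedes it below -/
import Mathlib

section
/- Theorem (stability of orthogonal sparsification): Let A = [[I, A_pn],[A_pnᵀ, A_nn]] be symmetric positive-definite. For any decomposition A_pn = Q_pf W_fn + Q_pc W_cn where [Q_pf Q_pc] is a square orthogonal matrix, the matrix B = [[I, W_cn],[W_cnᵀ, A_nn]] is symmetric positive-definite. -/
open Matrix

private lemma posDef_fromBlocks_one_iff {m n : Type*} [Fintype m] [DecidableEq m]
    [Fintype n] [DecidableEq n] (B : Matrix m n ℝ) (D : Matrix n n ℝ) :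
    (fromBlocks 1 B Bᵀ D).PosDef ↔ (D - Bᵀ * B).PosDef := by
  have h1 : (1 : Matrix m m ℝ).IsHermitian := isHermitian_one
  have hBt : Bᵀ = Bᴴ := (conjTranspose_eq_transpose_of_trivial B).symm
  rw [hBt, posDef_iff_dotProduct_mulVec, posDef_iff_dotProduct_mulVec]
  haveI : Invertible (1 : Matrix m m ℝ) := invertibleOne
  have hinv : (1 : Matrix m m ℝ)⁻¹ = 1 := by simp
  have hschur : ∀ (x : m → ℝ) (y : n → ℝ),
      (star (x ⊕ᵥ y)) ᵥ* (fromBlocks 1 B Bᴴ D) ⬝ᵥ (x ⊕ᵥ y) =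
      (star (x + B *ᵥ y)) ᵥ* (1 : Matrix m m ℝ) ⬝ᵥ (x + B *ᵥ y) +
        (star y) ᵥ* (D - Bᴴ * B) ⬝ᵥ y := by
    intro x y
    have := schur_complement_eq₁₁ (α := ℝ) B D x y h1
    simpa [hinv] using this
  constructor
  · rintro ⟨hH, hpos⟩
    refine ⟨by simpa [hinv] using (IsHermitian.fromBlocks₁₁ B D h1).mp hH, ?_⟩
    intro y hy
    have hx : (-(B *ᵥ y) ⊕ᵥ y) ≠ 0 := by
      intro h
      apply hy
      funext i
      have := congrFun h (Sum.inr i)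
      simpa using this
    have := hpos hx
    rw [dotProduct_mulVec, hschur] at this
    rw [dotProduct_mulVec]
    simpa using this
  · rintro ⟨hH, hpos⟩
    refine ⟨(IsHermitian.fromBlocks₁₁ B D h1).mpr (by simpa [hinv] using hH), ?_⟩
    intro x hx
    rw [dotProduct_mulVec, ← Sum.elim_comp_inl_inr x, hschur]
    rcases eq_or_ne (x ∘ Sum.inr) 0 with h2 | h2
    · have h1' : (x ∘ Sum.inl) ≠ 0 := by
        intro h1'
        apply hx
        funext i
        cases i with
        | inl i => exact congrFun h1' i
        | inr i => exact congrFun h2 i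
      have hz : (x ∘ Sum.inl) + B *ᵥ (x ∘ Sum.inr) ≠ 0 := by
        simpa [h2] using h1'
      have hq : (0:ℝ) < (star ((x ∘ Sum.inl) + B *ᵥ (x ∘ Sum.inr))) ᵥ*
          (1 : Matrix m m ℝ) ⬝ᵥ ((x ∘ Sum.inl) + B *ᵥ (x ∘ Sum.inr)) := by
        have := (Matrix.PosDef.one (n := m) (R := ℝ)).dotProduct_mulVec_pos hz
        rwa [dotProduct_mulVec] at this
      have hq2 : (0:ℝ) ≤ (star (x ∘ Sum.inr)) ᵥ* (D - Bᴴ * B) ⬝ᵥ (x ∘ Sum.inr) := by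
        simp [h2]
      linarith
    · have hq : (0:ℝ) ≤ (star ((x ∘ Sum.inl) + B *ᵥ (x ∘ Sum.inr))) ᵥ*
          (1 : Matrix m m ℝ) ⬝ᵥ ((x ∘ Sum.inl) + B *ᵥ (x ∘ Sum.inr)) := by
        have := (Matrix.PosDef.one (n := m) (R := ℝ)).posSemidef.dotProduct_mulVec_nonneg
          ((x ∘ Sum.inl) + B *ᵥ (x ∘ Sum.inr))
        rwa [dotProduct_mulVec] at this
      have hq2 : (0:ℝ) < (star (x ∘ Sum.inr)) ᵥ* (D - Bᴴ * B) ⬝ᵥ (x ∘ Sum.inr) := by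
        have := hpos h2
        rwa [dotProduct_mulVec] at this
      linarith

/-- Stability of orthogonal sparsification: if `A = [[I, A_pn],[A_pnᵀ, A_nn]]` is SPD
and `A_pn = Q_pf W_fn + Q_pc W_cn` with `[Q_pf Q_pc]` square orthogonal, then
`B = [[I, W_cn],[W_cnᵀ, A_nn]]` is SPD. -/
theorem sparsified_matrix_posDef
    {p f c n : ℕ} (hp : p = f + c)
    (A_pn : Matrix (Fin p) (Fin n) ℝ) (A_nn : Matrix (Fin n) (Fin n) ℝ)
    (Q_pf : Matrix (Fin p) (Fin f) ℝ) (Q_pc : Matrix (Fin p) (Fin c) ℝ)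
    (W_fn : Matrix (Fin f) (Fin n) ℝ) (W_cn : Matrix (Fin c) (Fin n) ℝ)
    (hQ : (Matrix.fromCols Q_pf Q_pc)ᵀ * Matrix.fromCols Q_pf Q_pc = 1)
    (hA : A_pn = Q_pf * W_fn + Q_pc * W_cn)
    (hPD : (Matrix.fromBlocks 1 A_pn A_pnᵀ A_nn).PosDef) :
    (Matrix.fromBlocks 1 W_cn W_cnᵀ A_nn).PosDef := by
  have hW : A_pnᵀ * A_pn = W_fnᵀ * W_fn + W_cnᵀ * W_cn := by
    rw [hA, ← fromCols_mul_fromRows, transpose_mul, Matrix.mul_assoc,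
      ← Matrix.mul_assoc (fromCols Q_pf Q_pc)ᵀ, hQ, Matrix.one_mul,
      transpose_fromRows, fromCols_mul_fromRows]
  have h1 : (A_nn - A_pnᵀ * A_pn).PosDef := (posDef_fromBlocks_one_iff _ _).mp hPD
  have h2 : A_nn - W_cnᵀ * W_cn = (A_nn - A_pnᵀ * A_pn) + W_fnᵀ * W_fn := by
    rw [hW]; abel
  refine (posDef_fromBlocks_one_iff _ _).mpr ?_
  rw [h2]
  exact h1.add_posSemidef (by
    simpa [conjTranspose_eq_transpose_of_trivial] using
      (posSemidef_conjTranspose_mul_self W_fn))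
end

section
/- Under the hypotheses of the orthogonal sparsification theorem (A = [[I, A_pn],[A_pnᵀ, A_nn]] SPD and A_pn = Q_pf W_fn + Q_pc W_cn with [Q_pf Q_pc] orthogonal), the Schur complement of the sparsified matrix dominates the exact Schur complement in the Loewner order: A_nn - W_cnᵀ W_cn ⪰ A_nn - A_pnᵀ A_pn, with difference W_fnᵀ W_fn which is positive semidefinite. -/
open Matrix

/-- Under the hypotheses of the orthogonal sparsification theorem, the sparsified Schur
complement dominates the exact one in the Loewner order: their difference equals
`W_fnᵀ W_fn`, which is positive semidefinite. -/
theorem sparsified_schur_dominates_exact_schur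
    {p f c n : ℕ} (hp : p = f + c)
    (A_pn : Matrix (Fin p) (Fin n) ℝ) (A_nn : Matrix (Fin n) (Fin n) ℝ)
    (Q_pf : Matrix (Fin p) (Fin f) ℝ) (Q_pc : Matrix (Fin p) (Fin c) ℝ)
    (W_fn : Matrix (Fin f) (Fin n) ℝ) (W_cn : Matrix (Fin c) (Fin n) ℝ)
    (hQ : (Matrix.fromCols Q_pf Q_pc)ᵀ * Matrix.fromCols Q_pf Q_pc = 1)
    (hA : A_pn = Q_pf * W_fn + Q_pc * W_cn)
    (hPD : (Matrix.fromBlocks 1 A_pn A_pnᵀ A_nn).PosDef) :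
    (A_nn - W_cnᵀ * W_cn) - (A_nn - A_pnᵀ * A_pn) = W_fnᵀ * W_fn ∧
      ((A_nn - W_cnᵀ * W_cn) - (A_nn - A_pnᵀ * A_pn)).PosSemidef := by
  rw [transpose_fromCols, fromRows_mul_fromCols] at hQ
  rw [← fromBlocks_one] at hQ
  have h1 : Q_pfᵀ * Q_pf = 1 := by
    simpa [-Matrix.fromBlocks_one] using congrArg Matrix.toBlocks₁₁ hQ
  have h2 : Q_pfᵀ * Q_pc = 0 := by
    simpa [-Matrix.fromBlocks_one] using congrArg Matrix.toBlocks₁₂ hQ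
  have h3 : Q_pcᵀ * Q_pf = 0 := by
    simpa [-Matrix.fromBlocks_one] using congrArg Matrix.toBlocks₂₁ hQ
  have h4 : Q_pcᵀ * Q_pc = 1 := by
    simpa [-Matrix.fromBlocks_one] using congrArg Matrix.toBlocks₂₂ hQ
  have e1 : ∀ M : Matrix (Fin f) (Fin n) ℝ, Q_pfᵀ * (Q_pf * M) = M := fun M => by
    rw [← Matrix.mul_assoc, h1, Matrix.one_mul]
  have e2 : ∀ M : Matrix (Fin c) (Fin n) ℝ, Q_pfᵀ * (Q_pc * M) = 0 := fun M => by
    rw [← Matrix.mul_assoc, h2, Matrix.zero_mul]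
  have e3 : ∀ M : Matrix (Fin f) (Fin n) ℝ, Q_pcᵀ * (Q_pf * M) = 0 := fun M => by
    rw [← Matrix.mul_assoc, h3, Matrix.zero_mul]
  have e4 : ∀ M : Matrix (Fin c) (Fin n) ℝ, Q_pcᵀ * (Q_pc * M) = M := fun M => by
    rw [← Matrix.mul_assoc, h4, Matrix.one_mul]
  have key : (A_nn - W_cnᵀ * W_cn) - (A_nn - A_pnᵀ * A_pn) = W_fnᵀ * W_fn := by
    subst hA
    simp only [transpose_add, transpose_mul, Matrix.add_mul, Matrix.mul_add, Matrix.mul_assoc,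
      e1, e2, e3, e4, Matrix.mul_zero, add_zero, zero_add]
    abel
  refine ⟨key, key ▸ ?_⟩
  simpa using Matrix.posSemidef_conjTranspose_mul_self W_fn
end

section
/- If ‖W_fn‖₂ ≤ ε, then the Schur complement error of orthogonal sparsification satisfies ‖W_fnᵀ W_fn‖₂ ≤ ε², i.e., the sparsified Schur complement A_nn − W_cnᵀ W_cn differs from the exact Schur complement A_nn − A_pnᵀ A_pn by a positive semidefinite matrix of spectral norm at most ε². -/
open Matrix
open scoped Matrix.Norms.L2Operator

/-- If `‖W_fn‖₂ ≤ ε`, the sparsified Schur complement differs from the exact one by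
the positive semidefinite matrix `W_fnᵀ W_fn` of spectral norm at most `ε²`. -/
theorem schur_error_norm_le
    {p f c n : ℕ} (hp : p = f + c) (ε : ℝ)
    (A_pn : Matrix (Fin p) (Fin n) ℝ) (A_nn : Matrix (Fin n) (Fin n) ℝ)
    (Q_pf : Matrix (Fin p) (Fin f) ℝ) (Q_pc : Matrix (Fin p) (Fin c) ℝ)
    (W_fn : Matrix (Fin f) (Fin n) ℝ) (W_cn : Matrix (Fin c) (Fin n) ℝ)
    (hQ : (Matrix.fromCols Q_pf Q_pc)ᵀ * Matrix.fromCols Q_pf Q_pc = 1)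
    (hA : A_pn = Q_pf * W_fn + Q_pc * W_cn)
    (hAnn : A_nn.IsSymm)
    (hW : ‖W_fn‖ ≤ ε) :
    ‖W_fnᵀ * W_fn‖ ≤ ε ^ 2 ∧
      (A_nn - W_cnᵀ * W_cn) - (A_nn - A_pnᵀ * A_pn) = W_fnᵀ * W_fn ∧
      (W_fnᵀ * W_fn).PosSemidef := by
  have hWnn : (0 : ℝ) ≤ ‖W_fn‖ := norm_nonneg _
  have h1 : ‖W_fnᵀ * W_fn‖ ≤ ε ^ 2 := by
    have : ‖W_fnᵀ * W_fn‖ = ‖W_fn‖ * ‖W_fn‖ := by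
      simpa using Matrix.l2_opNorm_conjTranspose_mul_self W_fn
    rw [this, sq]
    exact mul_le_mul hW hW hWnn (hWnn.trans hW)
  -- extract block orthogonality relations
  rw [transpose_fromCols, fromRows_mul_fromCols] at hQ
  rw [← Matrix.fromBlocks_one] at hQ
  obtain ⟨hff, hfc, hcf, hcc⟩ := Matrix.fromBlocks_inj.mp hQ
  have h2 : (A_nn - W_cnᵀ * W_cn) - (A_nn - A_pnᵀ * A_pn) = W_fnᵀ * W_fn := by
    have : A_pnᵀ * A_pn = W_fnᵀ * W_fn + W_cnᵀ * W_cn := by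
      rw [hA]
      simp only [transpose_add, transpose_mul, Matrix.add_mul, Matrix.mul_add]
      rw [Matrix.mul_assoc W_fnᵀ Q_pfᵀ, Matrix.mul_assoc W_fnᵀ Q_pfᵀ,
        Matrix.mul_assoc W_cnᵀ Q_pcᵀ, Matrix.mul_assoc W_cnᵀ Q_pcᵀ,
        ← Matrix.mul_assoc Q_pfᵀ Q_pf, ← Matrix.mul_assoc Q_pfᵀ Q_pc,
        ← Matrix.mul_assoc Q_pcᵀ Q_pf, ← Matrix.mul_assoc Q_pcᵀ Q_pc,
        hff, hfc, hcf, hcc]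
      simp
    rw [this]; abel
  have h3 : (W_fnᵀ * W_fn).PosSemidef := by
    simpa using Matrix.posSemidef_conjTranspose_mul_self W_fn
  exact ⟨h1, h2, h3⟩
end
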